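/- Let a > 0 and n ≥ 1 an integer, and let f be a positive twice differentiable function with f(0)=a, f'(0)=0 satisfying f·(4+f²)·f'' = 4(2n−1)(1+f'²) + (2n−2)·f²·f'². Then the function t ↦ f(t)^{2n−1}·(1 + f'(t)² + f(t)²f'(t)²/4)^{-1/2} is constant equal to a^{2n−1}. -/

import Mathlib

theorem stmt_17 (n : ℕ) (hn : 1 ≤ n) (a : ℝ) (ha : 0 < a) (f : ℝ → ℝ)
    (hpos : ∀ t, 0 < f t) (hf : Differentiable ℝ f) (hf' : Differentiable ℝ (deriv f))
    (h0 : f 0 = a) (h0' : deriv f 0 = 0)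
    (hode : ∀ t, f t * (4 + f t ^ 2) * deriv (deriv f) t =
      4 * (2 * (n : ℝ) - 1) * (1 + (deriv f t) ^ 2) +
        (2 * (n : ℝ) - 2) * f t ^ 2 * (deriv f t) ^ 2) :
    ∀ t : ℝ,
      f t ^ (2 * n - 1) *
        (Real.sqrt (1 + (deriv f t) ^ 2 + f t ^ 2 * (deriv f t) ^ 2 / 4))⁻¹ =
      a ^ (2 * n - 1) := by
  set k := 2 * n - 1 with hk
  have hkr : (k : ℝ) = 2 * (n : ℝ) - 1 := by
    have h2 : k + 1 = 2 * n := by omega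
    have h3 : ((k : ℕ) : ℝ) + 1 = 2 * (n : ℝ) := by exact_mod_cast congrArg (Nat.cast (R := ℝ)) h2
    linarith
  set G : ℝ → ℝ := fun t => 1 + deriv f t ^ 2 + f t ^ 2 * deriv f t ^ 2 / 4 with hGdef
  have hGpos : ∀ t, 0 < G t := by
    intro t
    have h1 := sq_nonneg (deriv f t)
    have h2 := sq_nonneg (f t * deriv f t)
    simp only [hGdef]
    nlinarith
  set H : ℝ → ℝ := fun t => f t ^ (2 * k) / G t with hHdef
  have key : ∀ t, HasDerivAt H 0 t := by
    intro t
    have hft : HasDerivAt f (deriv f t) t := (hf t).hasDerivAt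
    have hf't : HasDerivAt (deriv f) (deriv (deriv f) t) t := (hf' t).hasDerivAt
    have hNt : HasDerivAt (fun t => f t ^ (2 * k))
        (↑(2 * k) * f t ^ (2 * k - 1) * deriv f t) t := hft.pow _
    have hs2 : HasDerivAt (fun t => deriv f t ^ 2)
        (2 * deriv f t ^ 1 * deriv (deriv f) t) t := hf't.pow 2
    have hx2 : HasDerivAt (fun t => f t ^ 2) (2 * f t ^ 1 * deriv f t) t := hft.pow 2
    have hGt : HasDerivAt G
        ((2 * deriv f t ^ 1 * deriv (deriv f) t) +
          ((2 * f t ^ 1 * deriv f t) * deriv f t ^ 2 +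
            f t ^ 2 * (2 * deriv f t ^ 1 * deriv (deriv f) t)) / 4) t := by
      have h := ((hasDerivAt_const t 1).add hs2).add ((hx2.mul hs2).div_const 4)
      simp only [pow_one, zero_add] at h ⊢
      exact h
    have hne : G t ≠ 0 := (hGpos t).ne'
    have hdiv := hNt.div hGt hne
    refine HasDerivAt.congr_deriv hdiv (Eq.symm ?_)
    rw [eq_comm, div_eq_zero_iff]
    left
    have hxpow : f t ^ (2 * k) = f t ^ (2 * k - 1) * f t := by
      rw [← pow_succ]; congr 1; omega
    have inner : 2 * (k : ℝ) * deriv f t * G t - f t *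
        ((2 * deriv f t ^ 1 * deriv (deriv f) t) +
          ((2 * f t ^ 1 * deriv f t) * deriv f t ^ 2 +
            f t ^ 2 * (2 * deriv f t ^ 1 * deriv (deriv f) t)) / 4) = 0 := by
      simp only [hGdef]
      rw [hkr]
      linear_combination (-deriv f t / 2) * hode t
    calc ↑(2 * k) * f t ^ (2 * k - 1) * deriv f t * G t -
          f t ^ (2 * k) *
            ((2 * deriv f t ^ 1 * deriv (deriv f) t) +
              ((2 * f t ^ 1 * deriv f t) * deriv f t ^ 2 +
                f t ^ 2 * (2 * deriv f t ^ 1 * deriv (deriv f) t)) / 4)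
        = f t ^ (2 * k - 1) * (2 * (k : ℝ) * deriv f t * G t - f t *
            ((2 * deriv f t ^ 1 * deriv (deriv f) t) +
              ((2 * f t ^ 1 * deriv f t) * deriv f t ^ 2 +
                f t ^ 2 * (2 * deriv f t ^ 1 * deriv (deriv f) t)) / 4)) := by
          rw [hxpow]; push_cast; ring
      _ = 0 := by rw [inner, mul_zero]
  have hconst : ∀ t, H t = H 0 :=
    fun t => is_const_of_deriv_eq_zero (fun s => (key s).differentiableAt)
      (fun s => (key s).deriv) t 0
  have hH0 : H 0 = a ^ (2 * k) := by
    simp [hHdef, hGdef, h0, h0']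
  intro t
  have hGt := hGpos t
  have hGt' : Real.sqrt (G t) ^ 2 = G t := Real.sq_sqrt hGt.le
  show f t ^ k * (Real.sqrt (G t))⁻¹ = a ^ k
  have hsq : (f t ^ k * (Real.sqrt (G t))⁻¹) ^ 2 = (a ^ k) ^ 2 := by
    rw [mul_pow, inv_pow, hGt', ← pow_mul, mul_comm k 2, ← pow_mul, mul_comm k 2]
    rw [← div_eq_mul_inv]
    exact (hconst t).trans hH0
  have hnn : 0 ≤ f t ^ k * (Real.sqrt (G t))⁻¹ :=
    mul_nonneg (pow_nonneg (hpos t).le k) (inv_nonneg.2 (Real.sqrt_nonneg _))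
  calc f t ^ k * (Real.sqrt (G t))⁻¹
      = Real.sqrt ((f t ^ k * (Real.sqrt (G t))⁻¹) ^ 2) := (Real.sqrt_sq hnn).symm
    _ = Real.sqrt ((a ^ k) ^ 2) := by rw [hsq]
    _ = a ^ k := Real.sqrt_sq (pow_nonneg ha.le k)
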